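/- Let u, u₁ be defined near the boundary of the unit 4-disc by u(r,θ) = -log(1-r²) + log 2 + f(θ)·s⁴ + h(r,θ) and u₁(r) = -log(1-r²) + log 2 + f̄₀·(log r)⁴, where s = log(1/r), f ∈ C²(S³), f̄₀ = (1/|S³|)∫_{S³}f, and h = o(s⁴). If u(r,θ) = t = u₁(r₁) for r, r₁ near 1, then |r - r₁| = O((1-r₁)⁵) and 1-r = O(1-r₁), 1-r₁ = O(1-r). -/

import Mathlib

open MeasureTheory Filter Topology

/-- The unit 3-sphere in `ℝ⁴`. -/
noncomputable def unitSphere3 : Set (EuclideanSpace ℝ (Fin 4)) := Metric.sphere 0 1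

/-- The mean of `f` over the unit 3-sphere. -/
noncomputable def sphereAvg (f : EuclideanSpace ℝ (Fin 4) → ℝ) : ℝ :=
  (1 / (μH[3] unitSphere3).toReal) * ∫ θ' in unitSphere3, f θ' ∂(μH[3])

private lemma exp_sub_one_abs_le' {A : ℝ} (hA : |A| ≤ Real.log 2) :
    |Real.exp A - 1| ≤ 2 * |A| := by
  have hlog2 : Real.exp (Real.log 2) = 2 := Real.exp_log (by norm_num)
  rcases le_or_gt 0 A with h0 | h0
  · have hE2 : Real.exp A ≤ 2 := by
      rw [← hlog2]; exact Real.exp_le_exp.2 (by rwa [abs_of_nonneg h0] at hA)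
    have h1 : 1 - A ≤ Real.exp (-A) := by linarith [Real.add_one_le_exp (-A)]
    have h2 : Real.exp A * (1 - A) ≤ 1 := by
      calc Real.exp A * (1 - A) ≤ Real.exp A * Real.exp (-A) :=
            mul_le_mul_of_nonneg_left h1 (Real.exp_nonneg A)
      _ = 1 := by rw [← Real.exp_add]; simp
    have h3 : 0 ≤ Real.exp A - 1 := by linarith [Real.add_one_le_exp A]
    rw [abs_of_nonneg h3, abs_of_nonneg h0]
    nlinarith [Real.exp_pos A]
  · have h1 : A + 1 ≤ Real.exp A := Real.add_one_le_exp A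
    have h2 : Real.exp A ≤ 1 := by
      rw [← Real.exp_zero]; exact Real.exp_le_exp.2 h0.le
    rw [abs_of_nonpos (by linarith), abs_of_neg h0]
    linarith

/-- `log (1/ρ) ≤ 2 (1-ρ)` for `ρ ∈ [1/2, 1]`. -/
private lemma log_one_div_le' {ρ : ℝ} (h1 : (1:ℝ)/2 ≤ ρ) (h2 : ρ ≤ 1) :
    Real.log (1/ρ) ≤ 2 * (1 - ρ) := by
  have hρ : (0:ℝ) < ρ := by linarith
  have := Real.log_le_sub_one_of_pos (show (0:ℝ) < 1/ρ by positivity)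
  have h1ρ : 1/ρ - 1 ≤ 2 * (1 - ρ) := by
    rw [div_sub' hρ.ne', div_le_iff₀ hρ]
    nlinarith
  linarith

set_option maxHeartbeats 1000000 in
private lemma key_estimate' (B ρ ρ₁ L L₁ A : ℝ)
    (hB1 : 1 ≤ B)
    (hρ0 : 0 < ρ) (hρlt1 : ρ < 1) (hρ₁0 : 0 < ρ₁) (hρ₁lt1 : ρ₁ < 1)
    (hρhalf : (1:ℝ)/2 ≤ ρ) (hρ₁half : (1:ℝ)/2 ≤ ρ₁)
    (hsmall : 1 - ρ ≤ Real.log 2 / (64 * B))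
    (hsmall₁ : 1 - ρ₁ ≤ Real.log 2 / (64 * B))
    (hL4 : L ^ 4 ≤ 16 * (1 - ρ) ^ 4) (hL₁4 : L₁ ^ 4 ≤ 16 * (1 - ρ₁) ^ 4)
    (hAbound : |A| ≤ B * L₁ ^ 4 + B * L ^ 4)
    (hexpA : Real.exp A * (1 - ρ ^ 2) = 1 - ρ₁ ^ 2) :
    |ρ - ρ₁| ≤ 80000 * B * (1 - ρ₁) ^ 5
      ∧ 1 - ρ ≤ 80000 * B * (1 - ρ₁)
      ∧ 1 - ρ₁ ≤ 80000 * B * (1 - ρ) := by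
  have hlog2pos : (0:ℝ) < Real.log 2 := Real.log_pos (by norm_num)
  have hlog2lt : Real.log 2 < 1 := by
    nlinarith [Real.log_two_lt_d9]
  have hB0 : (0:ℝ) < B := by linarith
  have hρ1nn : (0:ℝ) ≤ 1 - ρ := by linarith
  have hρ₁1nn : (0:ℝ) ≤ 1 - ρ₁ := by linarith
  -- crude: |A| ≤ 16B((1-ρ₁)^4 + (1-ρ)^4)
  have hA16 : |A| ≤ 16 * B * (1 - ρ₁) ^ 4 + 16 * B * (1 - ρ) ^ 4 := by
    have h1 := mul_le_mul_of_nonneg_left hL₁4 hB0.le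
    have h2 := mul_le_mul_of_nonneg_left hL4 hB0.le
    linarith
  -- smallness: |A| ≤ log 2
  have hd1 : 1 - ρ ≤ 1 := by linarith
  have hd1' : 1 - ρ₁ ≤ 1 := by linarith
  have hpow4 : (1 - ρ) ^ 4 ≤ 1 - ρ := by
    have h3 : (1 - ρ) ^ 3 ≤ 1 := pow_le_one₀ hρ1nn hd1
    calc (1 - ρ) ^ 4 = (1 - ρ) ^ 3 * (1 - ρ) := by ring
    _ ≤ 1 * (1 - ρ) := mul_le_mul_of_nonneg_right h3 hρ1nn
    _ = 1 - ρ := by ring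
  have hpow4' : (1 - ρ₁) ^ 4 ≤ 1 - ρ₁ := by
    have h3 : (1 - ρ₁) ^ 3 ≤ 1 := pow_le_one₀ hρ₁1nn hd1'
    calc (1 - ρ₁) ^ 4 = (1 - ρ₁) ^ 3 * (1 - ρ₁) := by ring
    _ ≤ 1 * (1 - ρ₁) := mul_le_mul_of_nonneg_right h3 hρ₁1nn
    _ = 1 - ρ₁ := by ring
  have hmulε : 16 * B * (Real.log 2 / (64 * B)) = Real.log 2 / 4 := by
    field_simp; ring
  have hAlog : |A| ≤ Real.log 2 := by
    have h1 : 16 * B * (1 - ρ) ^ 4 ≤ Real.log 2 / 4 := by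
      have := mul_le_mul_of_nonneg_left (hpow4.trans hsmall) (by positivity : (0:ℝ) ≤ 16 * B)
      linarith [hmulε ▸ this]
    have h2 : 16 * B * (1 - ρ₁) ^ 4 ≤ Real.log 2 / 4 := by
      have := mul_le_mul_of_nonneg_left (hpow4'.trans hsmall₁) (by positivity : (0:ℝ) ≤ 16 * B)
      linarith [hmulε ▸ this]
    linarith
  -- exponential bounds
  have h1ρ2 : (0:ℝ) < 1 - ρ ^ 2 := by nlinarith
  have h1ρ₁2 : (0:ℝ) < 1 - ρ₁ ^ 2 := by nlinarith
  have hexpAle : Real.exp A ≤ 2 := by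
    have := (abs_le.1 hAlog).2
    calc Real.exp A ≤ Real.exp (Real.log 2) := Real.exp_le_exp.2 this
    _ = 2 := Real.exp_log (by norm_num)
  have hexpAge : (1:ℝ)/2 ≤ Real.exp A := by
    have := (abs_le.1 hAlog).1
    have h2 : Real.exp (-Real.log 2) ≤ Real.exp A := Real.exp_le_exp.2 this
    have h3 : Real.exp (-Real.log 2) = 1/2 := by
      rw [Real.exp_neg, Real.exp_log (by norm_num)]; norm_num
    linarith [h3 ▸ h2]
  -- comparability
  have hcmp1 : 1 - ρ₁ ^ 2 ≤ 2 * (1 - ρ ^ 2) := by nlinarith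
  have hcmp2 : 1 - ρ ^ 2 ≤ 2 * (1 - ρ₁ ^ 2) := by nlinarith
  have hrr1 : 1 - ρ ≤ 4 * (1 - ρ₁) := by nlinarith
  have hr1r : 1 - ρ₁ ≤ 4 * (1 - ρ) := by nlinarith
  -- refined |A| bound
  have hA4 : |A| ≤ 5000 * B * (1 - ρ₁) ^ 4 := by
    have h1 : (1 - ρ) ^ 4 ≤ (4 * (1 - ρ₁)) ^ 4 := pow_le_pow_left₀ hρ1nn hrr1 4
    have h2 : (4 * (1 - ρ₁)) ^ 4 = 256 * (1 - ρ₁) ^ 4 := by ring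
    nlinarith [hA16, hB0, pow_nonneg hρ₁1nn 4]
  -- conclude
  have hEdiff : |Real.exp A - 1| ≤ 2 * |A| := exp_sub_one_abs_le' hAlog
  have hsq : |ρ ^ 2 - ρ₁ ^ 2| ≤ 40000 * B * (1 - ρ₁) ^ 5 := by
    have h1 : ρ ^ 2 - ρ₁ ^ 2 = (1 - ρ ^ 2) * (Real.exp A - 1) := by nlinarith [hexpA]
    rw [h1, abs_mul, abs_of_nonneg h1ρ2.le]
    have h2 : 1 - ρ ^ 2 ≤ 4 * (1 - ρ₁) := by nlinarith
    have h3 : |Real.exp A - 1| ≤ 10000 * B * (1 - ρ₁) ^ 4 := by linarith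
    calc (1 - ρ ^ 2) * |Real.exp A - 1|
        ≤ (4 * (1 - ρ₁)) * (10000 * B * (1 - ρ₁) ^ 4) :=
          mul_le_mul h2 h3 (abs_nonneg _) (by positivity)
    _ = 40000 * B * (1 - ρ₁) ^ 5 := by ring
  have hmain : |ρ - ρ₁| ≤ 40000 * B * (1 - ρ₁) ^ 5 := by
    have h1 : |ρ - ρ₁| * (ρ + ρ₁) = |ρ ^ 2 - ρ₁ ^ 2| := by
      rw [← abs_of_nonneg (by linarith : (0:ℝ) ≤ ρ + ρ₁), ← abs_mul]
      congr 1; ring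
    nlinarith [abs_nonneg (ρ - ρ₁)]
  refine ⟨le_trans hmain ?_, by nlinarith, by nlinarith⟩
  have : (0:ℝ) ≤ (1 - ρ₁) ^ 5 := by positivity
  nlinarith

set_option maxHeartbeats 1000000 in
theorem level_set_radius_comparison
    (f : EuclideanSpace ℝ (Fin 4) → ℝ) (hf : ContDiff ℝ 2 f)
    (h : ℝ → EuclideanSpace ℝ (Fin 4) → ℝ)
    (hh : ∀ c > (0:ℝ), ∀ᶠ ρ in 𝓝[<] (1:ℝ), ∀ θ ∈ unitSphere3,
      |h ρ θ| ≤ c * (Real.log (1/ρ)) ^ 4)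
    (r : ℝ → EuclideanSpace ℝ (Fin 4) → ℝ) (r₁ : ℝ → ℝ)
    (hr₁mem : ∀ᶠ t in atTop, r₁ t ∈ Set.Ioo (0:ℝ) 1)
    (hr₁lim : Tendsto r₁ atTop (𝓝 1))
    (hrunif : ∀ c > (0:ℝ), ∀ᶠ t in atTop, ∀ θ ∈ unitSphere3,
      r t θ ∈ Set.Ioo (0:ℝ) 1 ∧ 1 - r t θ ≤ c)
    (heq : ∀ᶠ t in atTop, ∀ θ ∈ unitSphere3,
      (-Real.log (1 - (r t θ) ^ 2) + Real.log 2
          + f θ * (Real.log (1 / r t θ)) ^ 4 + h (r t θ) θ = t)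
        ∧ (-Real.log (1 - (r₁ t) ^ 2) + Real.log 2
          + sphereAvg f * (Real.log (r₁ t)) ^ 4 = t)) :
    ∃ C > (0:ℝ), ∀ᶠ t in atTop, ∀ θ ∈ unitSphere3,
      |r t θ - r₁ t| ≤ C * (1 - r₁ t) ^ 5
        ∧ 1 - r t θ ≤ C * (1 - r₁ t)
        ∧ 1 - r₁ t ≤ C * (1 - r t θ) := by
  -- make the average opaque
  obtain ⟨av, hav⟩ : ∃ a : ℝ, a = sphereAvg f := ⟨_, rfl⟩
  rw [← hav] at heq
  clear hav
  -- bound on f over the sphere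
  obtain ⟨M, hM⟩ := (isCompact_sphere (0 : EuclideanSpace ℝ (Fin 4)) 1).exists_bound_of_continuousOn
    hf.continuous.continuousOn
  clear hf
  set B : ℝ := |av| + max M 0 + 1 with hBdef
  have hB1 : (1:ℝ) ≤ B := by
    have := abs_nonneg av
    have := le_max_right M (0:ℝ)
    simp only [hBdef]; linarith
  have hB0 : (0:ℝ) < B := by linarith
  have hfB : ∀ θ ∈ unitSphere3, |f θ| + 1 ≤ B := by
    intro θ hθ
    have := hM θ hθ
    have h2 : |f θ| ≤ max M 0 := le_trans (by simpa using this) (le_max_left _ _)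
    have := abs_nonneg av
    simp only [hBdef]; linarith
  have hAvgB : |av| ≤ B := by
    have := le_max_right M (0:ℝ); simp only [hBdef]; linarith
  clear_value B
  clear hM
  -- threshold from hh with c = 1
  obtain ⟨l₀, hl₀lt, hl₀⟩ := mem_nhdsLT_iff_exists_Ioo_subset.1 (hh 1 one_pos)
  clear hh
  set l : ℝ := max l₀ (1/2) with hldef
  have hl1 : l < 1 := by
    simp only [hldef]
    exact max_lt hl₀lt (by norm_num)
  have hlhalf : (1:ℝ)/2 ≤ l := le_max_right _ _
  set ε : ℝ := min ((1 - l)/2) (Real.log 2 / (64 * B)) with hεdef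
  have hlog2pos : (0:ℝ) < Real.log 2 := Real.log_pos (by norm_num)
  have hεpos : 0 < ε := by
    apply lt_min (by linarith)
    positivity
  have hεl : ε ≤ (1 - l)/2 := min_le_left _ _
  have hεB : ε ≤ Real.log 2 / (64 * B) := min_le_right _ _
  clear_value ε
  -- eventual closeness of r₁
  have hr₁close : ∀ᶠ t in atTop, |r₁ t - 1| < ε :=
    hr₁lim (Metric.ball_mem_nhds 1 hεpos)
  clear hr₁lim
  refine ⟨80000 * B, by positivity, ?_⟩
  filter_upwards [hrunif ε hεpos, heq, hr₁mem, hr₁close] with t ht1 ht2 ht3 ht4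
  intro θ hθ
  obtain ⟨hρmem, hρε⟩ := ht1 θ hθ
  obtain ⟨hequ, hequ1⟩ := ht2 θ hθ
  set ρ := r t θ with hρdef
  set ρ₁ := r₁ t with hρ₁def
  obtain ⟨hρ0, hρlt1⟩ := hρmem
  obtain ⟨hρ₁0, hρ₁lt1⟩ := ht3
  have hρ₁ε : 1 - ρ₁ < ε := by
    have := abs_lt.1 ht4
    simp only [hρ₁def] at *; linarith [this.1]
  clear ht1 ht2 ht4
  -- basic position facts
  have hρhalf : (1:ℝ)/2 ≤ ρ := by linarith
  have hρ₁half : (1:ℝ)/2 ≤ ρ₁ := by linarith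
  have hρl : l < ρ := by linarith
  have hρl₀ : l₀ < ρ := lt_of_le_of_lt (le_max_left l₀ (1/2)) hρl
  -- the h bound
  have hhb : |h ρ θ| ≤ (Real.log (1/ρ)) ^ 4 := by
    have := hl₀ ⟨hρl₀, hρlt1⟩ θ hθ
    simpa using this
  clear hl₀
  clear_value l
  -- log bounds
  set L : ℝ := Real.log (1/ρ) with hLdef
  set L₁ : ℝ := Real.log (1/ρ₁) with hL₁def
  have hL0 : 0 ≤ L := Real.log_nonneg (one_le_one_div hρ0 hρlt1.le)
  have hL₁0 : 0 ≤ L₁ := Real.log_nonneg (one_le_one_div hρ₁0 hρ₁lt1.le)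
  have hLle : L ≤ 2 * (1 - ρ) := log_one_div_le' hρhalf hρlt1.le
  have hL₁le : L₁ ≤ 2 * (1 - ρ₁) := log_one_div_le' hρ₁half hρ₁lt1.le
  have hL4 : L ^ 4 ≤ 16 * (1 - ρ) ^ 4 := by
    calc L ^ 4 ≤ (2 * (1 - ρ)) ^ 4 := pow_le_pow_left₀ hL0 hLle 4
    _ = 16 * (1 - ρ) ^ 4 := by ring
  have hL₁4 : L₁ ^ 4 ≤ 16 * (1 - ρ₁) ^ 4 := by
    calc L₁ ^ 4 ≤ (2 * (1 - ρ₁)) ^ 4 := pow_le_pow_left₀ hL₁0 hL₁le 4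
    _ = 16 * (1 - ρ₁) ^ 4 := by ring
  have hlogρ₁ : (Real.log ρ₁) ^ 4 = L₁ ^ 4 := by
    simp only [hL₁def, one_div, Real.log_inv]; ring
  -- the key quantity A
  set A : ℝ := Real.log (1 - ρ₁ ^ 2) - Real.log (1 - ρ ^ 2) with hAdef
  have hAeq : A = av * L₁ ^ 4 - f θ * L ^ 4 - h ρ θ := by
    simp only [hAdef]
    rw [← hlogρ₁]
    linarith [hequ, hequ1]
  have h1ρ2 : (0:ℝ) < 1 - ρ ^ 2 := by
    have : 1 - ρ ^ 2 = (1 - ρ) * (1 + ρ) := by ring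
    rw [this]; exact mul_pos (by linarith) (by linarith)
  have h1ρ₁2 : (0:ℝ) < 1 - ρ₁ ^ 2 := by
    have : 1 - ρ₁ ^ 2 = (1 - ρ₁) * (1 + ρ₁) := by ring
    rw [this]; exact mul_pos (by linarith) (by linarith)
  have hexpA : Real.exp A * (1 - ρ ^ 2) = 1 - ρ₁ ^ 2 := by
    rw [hAdef, Real.exp_sub, Real.exp_log h1ρ₁2, Real.exp_log h1ρ2]
    field_simp
  clear_value ρ ρ₁ L L₁ A
  clear hequ hequ1 heq hrunif hr₁mem hr₁close
  -- bound on |A|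
  have hL4nonneg : (0:ℝ) ≤ L ^ 4 := by positivity
  have hL₁4nonneg : (0:ℝ) ≤ L₁ ^ 4 := by positivity
  have hAbound : |A| ≤ B * L₁ ^ 4 + B * L ^ 4 := by
    rw [hAeq]
    have h1 : |av * L₁ ^ 4 - f θ * L ^ 4 - h ρ θ|
        ≤ |av| * L₁ ^ 4 + |f θ| * L ^ 4 + |h ρ θ| := by
      calc |av * L₁ ^ 4 - f θ * L ^ 4 - h ρ θ|
          ≤ |av * L₁ ^ 4 - f θ * L ^ 4| + |h ρ θ| := abs_sub _ _
        _ ≤ |av * L₁ ^ 4| + |f θ * L ^ 4| + |h ρ θ| := by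
            linarith [abs_sub (av * L₁ ^ 4) (f θ * L ^ 4)]
        _ = |av| * L₁ ^ 4 + |f θ| * L ^ 4 + |h ρ θ| := by
            rw [abs_mul, abs_mul, abs_of_nonneg hL₁4nonneg, abs_of_nonneg hL4nonneg]
    have h2 : |f θ| * L ^ 4 + |h ρ θ| ≤ B * L ^ 4 := by
      have hb := hfB θ hθ
      have h3 : |f θ| * L ^ 4 + L ^ 4 = (|f θ| + 1) * L ^ 4 := by ring
      have h4 : (|f θ| + 1) * L ^ 4 ≤ B * L ^ 4 :=
        mul_le_mul_of_nonneg_right hb hL4nonneg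
      linarith
    have h3 : |av| * L₁ ^ 4 ≤ B * L₁ ^ 4 :=
      mul_le_mul_of_nonneg_right hAvgB hL₁4nonneg
    linarith
  -- conclude via the key estimate
  exact key_estimate' B ρ ρ₁ L L₁ A hB1 hρ0 hρlt1 hρ₁0 hρ₁lt1 hρhalf hρ₁half
    (by linarith) (by linarith) hL4 hL₁4 hAbound hexpA
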